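/- Let M be a PrA⁻-structure, Mul its bounded-multiplication relation, and n : ℕ. Then an element y : M satisfies Hyp n y if and only if there exists a natural number m ≤ 2^(2^n) with y = m • one. -/

import Mathlib

/-- A model of the theory `PrA⁻`: an additive cancellative commutative monoid with
a distinguished element `one` satisfying the `PrA⁻` axioms. -/
structure PrAMinus (M : Type*) [AddCancelCommMonoid M] where
  one : M
  succ_ne_zero : ∀ x : M, x + one ≠ 0
  exists_pred : ∀ x : M, x ≠ 0 → ∃ y : M, x = y + one
  total : ∀ x y : M, (∃ z, x + z = y) ∨ (∃ z, y + z = x)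

/-- The strict order `x < y` of a `PrA⁻`-model: `∃ z ≠ 0, x + z = y`. -/
def PrAMinus.Lt {M : Type*} [AddCancelCommMonoid M] (_ : PrAMinus M) (x y : M) : Prop :=
  ∃ z : M, z ≠ 0 ∧ x + z = y

/-- The bounded-multiplication relation `Mul n x y z` of a `PrA⁻`-model. -/
def PrAMinus.Mul {M : Type*} [AddCancelCommMonoid M] (S : PrAMinus M) :
    ℕ → M → M → M → Prop
  | 0, x, y, z =>
      (y = 0 ∧ z = 0) ∨ (y = S.one ∧ z = x) ∨ (y = S.one + S.one ∧ z = x + x)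
  | n + 1, x, y, z =>
      ∃ y₁ y₂ y₃ y₄ z₁ z₂ z₄ : M,
        y = y₃ + y₄ ∧ S.Mul n y₁ y₂ y₃ ∧ S.Mul n x y₁ z₁ ∧ S.Mul n z₁ y₂ z₂ ∧
          S.Mul n x y₄ z₄ ∧ z = z₂ + z₄ ∧ S.Lt y₂ y₁

/-- The predicate `Hyp n y` of a `PrA⁻`-model. -/
def PrAMinus.Hyp {M : Type*} [AddCancelCommMonoid M] (S : PrAMinus M) (n : ℕ) (y : M) :
    Prop :=
  S.Mul n S.one y y ∧ S.Mul n 0 y 0 ∧ (∀ x : M, ∃! z : M, S.Mul n x y z) ∧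
    ∀ x₀ x₁ x₂ : M, x₀ = x₁ + x₂ →
      ∃ z₀ z₁ z₂ : M, S.Mul n x₁ y z₁ ∧ S.Mul n x₂ y z₂ ∧ S.Mul n x₀ y z₀ ∧ z₀ = z₁ + z₂

namespace PrAMinus

variable {M : Type*} [AddCancelCommMonoid M] (S : PrAMinus M)

lemma nsmul_one_add_ne_zero (k : ℕ) (c : M) : (k + 1) • S.one + c ≠ 0 := by
  rw [succ_nsmul]
  have h : k • S.one + S.one + c = (k • S.one + c) + S.one := by abel
  rw [h]
  exact S.succ_ne_zero _

lemma nsmul_one_ne_zero (k : ℕ) : (k + 1) • S.one ≠ 0 := by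
  simpa using S.nsmul_one_add_ne_zero k 0

lemma nsmul_one_eq_zero {c : ℕ} (h : c • S.one = 0) : c = 0 := by
  cases c with
  | zero => rfl
  | succ k => exact absurd h (S.nsmul_one_ne_zero k)

lemma nsmul_one_inj {a b : ℕ} (h : a • S.one = b • S.one) : a = b := by
  rcases le_total a b with hle | hle
  · obtain ⟨c, rfl⟩ := Nat.exists_eq_add_of_le hle
    rw [add_nsmul] at h
    have hc : c • S.one = 0 := by
      have := h.symm
      rwa [left_eq_add] at h
    have := S.nsmul_one_eq_zero hc
    omega
  · obtain ⟨c, rfl⟩ := Nat.exists_eq_add_of_le hle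
    rw [add_nsmul] at h
    have hc : c • S.one = 0 := by
      rw [eq_comm, left_eq_add] at h
      exact h
    have := S.nsmul_one_eq_zero hc
    omega

lemma lt_nsmul_iff {a b : ℕ} : S.Lt (a • S.one) (b • S.one) ↔ a < b := by
  constructor
  · rintro ⟨c, hc, h⟩
    by_contra hab
    push_neg at hab
    obtain ⟨d, rfl⟩ := Nat.exists_eq_add_of_le hab
    rw [add_nsmul] at h
    have h' : d • S.one + c = 0 := by
      apply add_left_cancel (a := b • S.one)
      rw [← add_assoc, h, add_zero]
    cases d with
    | zero => rw [zero_nsmul, zero_add] at h'; exact hc h'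
    | succ k => exact S.nsmul_one_add_ne_zero k c h'
  · intro h
    obtain ⟨d, rfl⟩ := Nat.exists_eq_add_of_lt h
    refine ⟨(d + 1) • S.one, S.nsmul_one_ne_zero d, ?_⟩
    rw [← add_nsmul]
    congr 1

lemma mul_iff (n : ℕ) (x y z : M) :
    S.Mul n x y z ↔ ∃ m : ℕ, m ≤ 2 ^ (2 ^ n) ∧ y = m • S.one ∧ z = m • x := by
  induction n generalizing x y z with
  | zero =>
    simp only [PrAMinus.Mul]
    constructor
    · rintro (⟨rfl, rfl⟩ | ⟨rfl, rfl⟩ | ⟨rfl, rfl⟩)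
      · exact ⟨0, by norm_num, by simp, by simp⟩
      · exact ⟨1, by norm_num, by simp, by simp⟩
      · exact ⟨2, by norm_num, by rw [two_nsmul], by rw [two_nsmul]⟩
    · rintro ⟨m, hm, rfl, rfl⟩
      norm_num at hm
      interval_cases m
      · exact Or.inl ⟨by simp, by simp⟩
      · exact Or.inr (Or.inl ⟨by simp, by simp⟩)
      · exact Or.inr (Or.inr ⟨by rw [two_nsmul], by rw [two_nsmul]⟩)
  | succ n ih =>
    have hpow : 2 ^ (2 ^ (n + 1)) = 2 ^ (2 ^ n) * 2 ^ (2 ^ n) := by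
      rw [pow_succ, pow_mul, sq]
    have hN : 0 < 2 ^ (2 ^ n) := Nat.pow_pos (by norm_num)
    simp only [PrAMinus.Mul]
    constructor
    · rintro ⟨y₁, y₂, y₃, y₄, z₁, z₂, z₄, rfl, h₁, h₂, h₃, h₄, rfl, hlt⟩
      obtain ⟨m₂, hm₂, hy₂, hy₃⟩ := (ih y₁ y₂ y₃).mp h₁
      obtain ⟨m₁, hm₁, hy₁, hz₁⟩ := (ih x y₁ z₁).mp h₂
      obtain ⟨m₂', hm₂', hy₂', hz₂⟩ := (ih z₁ y₂ z₂).mp h₃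
      obtain ⟨m₄, hm₄, hy₄, hz₄⟩ := (ih x y₄ z₄).mp h₄
      have e : m₂' = m₂ := S.nsmul_one_inj (hy₂'.symm.trans hy₂)
      rw [e] at hz₂
      have hltN : m₂ < m₁ := (S.lt_nsmul_iff).mp (by rw [← hy₂, ← hy₁]; exact hlt)
      refine ⟨m₂ * m₁ + m₄, ?_, ?_, ?_⟩
      · rw [hpow]
        calc m₂ * m₁ + m₄ ≤ m₂ * 2 ^ (2 ^ n) + 2 ^ (2 ^ n) :=
              add_le_add (Nat.mul_le_mul_left _ hm₁) hm₄
          _ = (m₂ + 1) * 2 ^ (2 ^ n) := by ring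
          _ ≤ 2 ^ (2 ^ n) * 2 ^ (2 ^ n) :=
              Nat.mul_le_mul_right _ (le_trans hltN hm₁)
      · rw [hy₃, hy₄, hy₁, add_nsmul, smul_smul]
      · rw [hz₂, hz₄, hz₁, add_nsmul, smul_smul]
    · rintro ⟨m, hm, rfl, rfl⟩
      rw [hpow] at hm
      obtain ⟨m₁, m₂, m₄, h₁N, h₂N, h₄N, hlt, hsum⟩ :
          ∃ m₁ m₂ m₄ : ℕ, m₁ ≤ 2 ^ (2 ^ n) ∧ m₂ ≤ 2 ^ (2 ^ n) ∧ m₄ ≤ 2 ^ (2 ^ n) ∧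
            m₂ < m₁ ∧ m₂ * m₁ + m₄ = m := by
        rcases eq_or_lt_of_le hm with heq | hltm
        · obtain ⟨k, hk⟩ : ∃ k, 2 ^ (2 ^ n) = k + 1 := ⟨2 ^ (2 ^ n) - 1, by omega⟩
          refine ⟨k + 1, k, k + 1, by omega, by omega, by omega, by omega, ?_⟩
          rw [heq, hk]; ring
        · refine ⟨2 ^ (2 ^ n), m / 2 ^ (2 ^ n), m % 2 ^ (2 ^ n), le_refl _, ?_, ?_, ?_, ?_⟩
          · exact le_of_lt ((Nat.div_lt_iff_lt_mul hN).mpr hltm)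
          · exact le_of_lt (Nat.mod_lt _ hN)
          · exact (Nat.div_lt_iff_lt_mul hN).mpr hltm
          · rw [mul_comm]; exact Nat.div_add_mod m _
      refine ⟨m₁ • S.one, m₂ • S.one, (m₂ * m₁) • S.one, m₄ • S.one,
              m₁ • x, (m₂ * m₁) • x, m₄ • x, ?_, ?_, ?_, ?_, ?_, ?_, ?_⟩
      · rw [← add_nsmul, hsum]
      · exact (ih _ _ _).mpr ⟨m₂, h₂N, rfl, (smul_smul m₂ m₁ S.one).symm⟩
      · exact (ih _ _ _).mpr ⟨m₁, h₁N, rfl, rfl⟩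
      · exact (ih _ _ _).mpr ⟨m₂, h₂N, rfl, (smul_smul m₂ m₁ x).symm⟩
      · exact (ih _ _ _).mpr ⟨m₄, h₄N, rfl, rfl⟩
      · rw [← add_nsmul, hsum]
      · exact (S.lt_nsmul_iff).mpr hlt

end PrAMinus

theorem prAMinus_hyp_iff {M : Type*} [AddCancelCommMonoid M] (S : PrAMinus M)
    (n : ℕ) (y : M) :
    S.Hyp n y ↔ ∃ m : ℕ, m ≤ 2 ^ (2 ^ n) ∧ y = m • S.one := by
  constructor
  · rintro ⟨h1, -, -, -⟩
    obtain ⟨m, hm, hy, -⟩ := (S.mul_iff n S.one y y).mp h1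
    exact ⟨m, hm, hy⟩
  · rintro ⟨m, hm, rfl⟩
    refine ⟨?_, ?_, ?_, ?_⟩
    · exact (S.mul_iff n _ _ _).mpr ⟨m, hm, rfl, rfl⟩
    · exact (S.mul_iff n _ _ _).mpr ⟨m, hm, rfl, (smul_zero m).symm⟩
    · intro x
      refine ⟨m • x, (S.mul_iff n _ _ _).mpr ⟨m, hm, rfl, rfl⟩, ?_⟩
      rintro z hz
      obtain ⟨m', hm', hy', rfl⟩ := (S.mul_iff n _ _ _).mp hz
      rw [← S.nsmul_one_inj hy']
    · intro x₀ x₁ x₂ h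
      exact ⟨m • x₀, m • x₁, m • x₂,
        (S.mul_iff n _ _ _).mpr ⟨m, hm, rfl, rfl⟩,
        (S.mul_iff n _ _ _).mpr ⟨m, hm, rfl, rfl⟩,
        (S.mul_iff n _ _ _).mpr ⟨m, hm, rfl, rfl⟩,
        by rw [h, smul_add]⟩
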